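/- Let h₁, h₂ : [0,1] → [0,1] be twice continuously differentiable with hᵢ' > 0, hᵢ(0)=0, hᵢ(1)=1, and suppose -h₂''(p)/h₂'(p) ≥ -h₁''(p)/h₁'(p) for all p ∈ (0,1). Then for all p₀ and ε with 0 < ε ≤ min(p₀, 1-p₀) and p₀ < 1, the DT probability premia satisfy λ₂(p₀,ε) ≥ λ₁(p₀,ε), where λᵢ is the unique solution in [-ε, ε] of hᵢ(p₀ - λ) = (hᵢ(p₀-ε) + hᵢ(p₀+ε))/2. -/

import Mathlib

open Set

/-- Global comparative risk aversion for the DT probability premium. -/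
theorem dt_comparative_probability_premium
    (h₁ h₂ : ℝ → ℝ)
    (hC1 : ContDiff ℝ 2 h₁) (hC2 : ContDiff ℝ 2 h₂)
    (hmap1 : MapsTo h₁ (Icc 0 1) (Icc 0 1)) (hmap2 : MapsTo h₂ (Icc 0 1) (Icc 0 1))
    (hd1 : ∀ p ∈ Icc (0:ℝ) 1, 0 < deriv h₁ p)
    (hd2 : ∀ p ∈ Icc (0:ℝ) 1, 0 < deriv h₂ p)
    (h10 : h₁ 0 = 0) (h11 : h₁ 1 = 1) (h20 : h₂ 0 = 0) (h21 : h₂ 1 = 1)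
    (hidx : ∀ p ∈ Ioo (0:ℝ) 1,
      -(deriv (deriv h₂) p) / deriv h₂ p ≥ -(deriv (deriv h₁) p) / deriv h₁ p) :
    ∀ p₀ ε lam₁ lam₂ : ℝ, 0 < ε → ε ≤ min p₀ (1 - p₀) → p₀ < 1 →
      lam₁ ∈ Icc (-ε) ε → lam₂ ∈ Icc (-ε) ε →
      h₁ (p₀ - lam₁) = (h₁ (p₀ - ε) + h₁ (p₀ + ε)) / 2 →
      h₂ (p₀ - lam₂) = (h₂ (p₀ - ε) + h₂ (p₀ + ε)) / 2 →
      lam₁ ≤ lam₂ := by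
  intro p₀ ε lam₁ lam₂ hε hεmin hp₀ hl1 hl2 heq1 heq2
  -- derivative regularity
  have hC1' : ContDiff ℝ 1 (deriv h₁) := by
    have := (contDiff_succ_iff_deriv (n := 1)).mp (by exact_mod_cast hC1)
    exact this.2.2
  have hC2' : ContDiff ℝ 1 (deriv h₂) := by
    have := (contDiff_succ_iff_deriv (n := 1)).mp (by exact_mod_cast hC2)
    exact this.2.2
  have hcont1 : Continuous h₁ := hC1.continuous
  have hcont2 : Continuous h₂ := hC2.continuous
  have hd1' : Differentiable ℝ (deriv h₁) := hC1'.differentiable one_ne_zero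
  have hd2' : Differentiable ℝ (deriv h₂) := hC2'.differentiable one_ne_zero
  have hdiff1 : Differentiable ℝ h₁ := hC1.differentiable (by norm_num)
  have hdiff2 : Differentiable ℝ h₂ := hC2.differentiable (by norm_num)
  -- strict monotonicity
  have hm1 : StrictMonoOn h₁ (Icc 0 1) :=
    strictMonoOn_of_deriv_pos (convex_Icc 0 1) hcont1.continuousOn
      (fun x hx => hd1 x (by rw [interior_Icc] at hx; exact Ioo_subset_Icc_self hx))
  have hm2 : StrictMonoOn h₂ (Icc 0 1) :=
    strictMonoOn_of_deriv_pos (convex_Icc 0 1) hcont2.continuousOn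
      (fun x hx => hd2 x (by rw [interior_Icc] at hx; exact Ioo_subset_Icc_self hx))
  -- the ratio of derivatives is antitone
  set r : ℝ → ℝ := fun x => deriv h₂ x / deriv h₁ x with hr
  have hrant : AntitoneOn r (Icc 0 1) := by
    apply antitoneOn_of_deriv_nonpos (convex_Icc 0 1)
    · exact ContinuousOn.div hd2'.continuous.continuousOn hd1'.continuous.continuousOn
        (fun x hx => (hd1 x hx).ne')
    · rw [interior_Icc]
      intro x hx
      exact ((hd2' x).div (hd1' x) (hd1 x (Ioo_subset_Icc_self hx)).ne').differentiableWithinAt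
    · rw [interior_Icc]
      intro x hx
      have hx' : x ∈ Icc (0:ℝ) 1 := Ioo_subset_Icc_self hx
      have hder : deriv r x = (deriv (deriv h₂) x * deriv h₁ x -
          deriv h₂ x * deriv (deriv h₁) x) / (deriv h₁ x) ^ 2 :=
        deriv_div (hd2' x) (hd1' x) (hd1 x hx').ne'
      rw [hder]
      apply div_nonpos_of_nonpos_of_nonneg _ (sq_nonneg _)
      have := hidx x hx
      rw [ge_iff_le, div_le_div_iff₀ (hd1 x hx') (hd2 x hx')] at this
      nlinarith [hd1 x hx', hd2 x hx']
  -- set up points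
  set a := p₀ - ε
  set c := p₀ + ε
  set b₁ := p₀ - lam₁
  set b₂ := p₀ - lam₂
  have hεp : ε ≤ p₀ := le_trans hεmin (min_le_left _ _)
  have hεq : ε ≤ 1 - p₀ := le_trans hεmin (min_le_right _ _)
  have haI : a ∈ Icc (0:ℝ) 1 := ⟨by simp [a]; linarith, by simp only [a]; linarith⟩
  have hcI : c ∈ Icc (0:ℝ) 1 := ⟨by simp only [c]; linarith, by simp only [c]; linarith⟩
  have hb1I : b₁ ∈ Icc (0:ℝ) 1 := ⟨by simp only [b₁]; linarith [hl1.2], by simp only [b₁]; linarith [hl1.1]⟩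
  have hb2I : b₂ ∈ Icc (0:ℝ) 1 := ⟨by simp only [b₂]; linarith [hl2.2], by simp only [b₂]; linarith [hl2.1]⟩
  have hac : a < c := by simp only [a, c]; linarith
  have h1ac : h₁ a < h₁ c := hm1 haI hcI hac
  have hab1 : a < b₁ := by
    have : h₁ a < h₁ b₁ := by rw [heq1]; linarith
    exact (hm1.lt_iff_lt haI hb1I).mp this
  have hb1c : b₁ < c := by
    have : h₁ b₁ < h₁ c := by rw [heq1]; linarith
    exact (hm1.lt_iff_lt hb1I hcI).mp this
  -- Cauchy MVT on [a, b₁] and [b₁, c]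
  have key : ∀ u v : ℝ, u < v → u ∈ Icc (0:ℝ) 1 → v ∈ Icc (0:ℝ) 1 →
      ∃ ξ ∈ Ioo u v, (h₂ v - h₂ u) = (h₁ v - h₁ u) * r ξ := by
    intro u v huv huI hvI
    obtain ⟨ξ, hξ, hξeq⟩ := exists_ratio_deriv_eq_ratio_slope h₂ huv
      hcont2.continuousOn hdiff2.differentiableOn h₁
      hcont1.continuousOn hdiff1.differentiableOn
    refine ⟨ξ, hξ, ?_⟩
    have hξI : ξ ∈ Icc (0:ℝ) 1 := ⟨le_trans huI.1 hξ.1.le, le_trans hξ.2.le hvI.2⟩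
    have hne : deriv h₁ ξ ≠ 0 := (hd1 ξ hξI).ne'
    simp only [hr]; field_simp
    linarith [hξeq]
  obtain ⟨ξ₁, hξ₁, hξ₁eq⟩ := key a b₁ hab1 haI hb1I
  obtain ⟨ξ₂, hξ₂, hξ₂eq⟩ := key b₁ c hb1c hb1I hcI
  have hξ₁I : ξ₁ ∈ Icc (0:ℝ) 1 := ⟨le_trans haI.1 hξ₁.1.le, le_trans hξ₁.2.le hb1I.2⟩
  have hξ₂I : ξ₂ ∈ Icc (0:ℝ) 1 := ⟨le_trans hb1I.1 hξ₂.1.le, le_trans hξ₂.2.le hcI.2⟩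
  have hrmono : r ξ₂ ≤ r ξ₁ := hrant hξ₁I hξ₂I (le_of_lt (lt_trans hξ₁.2 hξ₂.1))
  -- equal h₁ increments
  have hD : h₁ b₁ - h₁ a = h₁ c - h₁ b₁ := by rw [heq1]; ring
  have hDpos : 0 < h₁ b₁ - h₁ a := sub_pos.mpr (hm1 haI hb1I hab1)
  -- conclude h₂ b₂ ≤ h₂ b₁
  have hkey : h₂ c - h₂ b₁ ≤ h₂ b₁ - h₂ a := by
    rw [hξ₁eq, hξ₂eq, ← hD]
    exact mul_le_mul_of_nonneg_left hrmono hDpos.le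
  have h2le : h₂ b₂ ≤ h₂ b₁ := by rw [heq2]; linarith
  have : b₂ ≤ b₁ := by
    by_contra hlt
    push_neg at hlt
    exact absurd (hm2 hb1I hb2I hlt) (not_lt.mpr h2le)
  simp only [b₁, b₂] at this
  linarith
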